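/- Let o be a compact discrete valuation ring with residue field k of cardinality q > 2. For any ℓ ≥ 0 and any A ∈ gl_n(o/p^ℓ), the reduction modulo p of the Lie centralizer C_{gl_n(o)}(A) (i.e., of {X ∈ gl_n(o) : [X,A] ≡ 0 mod p^ℓ}) equals the additive span of the reduction modulo p of the group centralizer C_{GL_n(o)}(A). -/

import Mathlib

open Polynomial Matrix

lemma exists_pow_idem {M : Type*} [Monoid M] [Finite M] (x : M) :
    ∃ m : ℕ, 1 ≤ m ∧ x ^ (2 * m) = x ^ m := by
  obtain ⟨a, b, hne, hab⟩ := Finite.exists_ne_map_eq_of_infinite (fun i : ℕ => x ^ i)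
  wlog hlt : a < b generalizing a b
  · exact this b a hne.symm hab.symm (by omega)
  set d := b - a with hd
  have hdpos : 1 ≤ d := by omega
  have key : ∀ k j : ℕ, x ^ (a + j + k * d) = x ^ (a + j) := by
    intro k
    induction k with
    | zero => simp
    | succ k ih =>
      intro j
      have h1 : a + j + (k + 1) * d = (a + d) + (j + k * d) := by ring
      have h2 : a + d = b := by omega
      calc x ^ (a + j + (k + 1) * d) = x ^ (a + d) * x ^ (j + k * d) := by
            rw [h1, pow_add]
        _ = x ^ a * x ^ (j + k * d) := by rw [h2, ← hab]
        _ = x ^ (a + j + k * d) := by rw [← pow_add]; ring_nf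
        _ = x ^ (a + j) := ih j
  refine ⟨d * (a + 1), Nat.one_le_iff_ne_zero.mpr (by positivity), ?_⟩
  have hma : a ≤ d * (a + 1) := by nlinarith
  have e1 : 2 * (d * (a + 1)) = a + (d * (a + 1) - a) + (a + 1) * d := by
    have : d * (a+1) = (a+1) * d := by ring
    omega
  have e2 : d * (a + 1) = a + (d * (a + 1) - a) := by omega
  rw [e1, key, ← e2]

lemma aux_isUnit {R M : Type*} [CommRing R] [Ring M] [Algebra R M]
    (x : M) (m : ℕ) (hm : 1 ≤ m) (hx : x ^ (2 * m) = x ^ m)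
    (c : R) (hc : IsUnit c) :
    IsUnit (x - algebraMap R M c + algebraMap R M c * x ^ m) := by
  obtain ⟨m', rfl⟩ : ∃ m', m = m' + 1 := ⟨m - 1, by omega⟩
  obtain ⟨u, rfl⟩ := hc
  set c : R := (u : R)
  set d : R := ((u⁻¹ : Rˣ) : R) with hdd
  have hcd : (C c : R[X]) * C d = 1 := by
    rw [← C_mul, hdd, Units.mul_inv, C_1]
  set P : R[X] := X - C c + C c * X ^ (m' + 1) with hP
  have h1 : IsCoprime P (X : R[X]) := by
    refine ⟨-C d, C d + X ^ m', ?_⟩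
    have : (C d : R[X]) * C c = 1 := by rw [mul_comm]; exact hcd
    rw [hP]; linear_combination (1 - (X:R[X]) ^ (m' + 1)) * this
  have h2 : IsCoprime P ((X : R[X]) ^ (m' + 1) - 1) := by
    refine ⟨X ^ m', -(1 + C c * X ^ m'), ?_⟩
    rw [hP]; ring
  have hcop : IsCoprime P ((X : R[X]) ^ (2 * (m' + 1)) - X ^ (m' + 1)) := by
    have h3 : (X : R[X]) ^ (2 * (m' + 1)) - X ^ (m' + 1)
        = X ^ (m' + 1) * (X ^ (m' + 1) - 1) := by ring
    rw [h3]
    exact IsCoprime.mul_right (h1.pow_right) h2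
  obtain ⟨a, b, hab⟩ := hcop
  have h4 := congrArg (Polynomial.aeval x) hab
  simp only [_root_.map_add, _root_.map_mul, _root_.map_sub, map_pow, _root_.map_one, aeval_X, aeval_C, hP] at h4
  rw [hx, sub_self, mul_zero, add_zero] at h4
  have hab2 : P * a + (X ^ (2 * (m' + 1)) - X ^ (m' + 1)) * b = 1 := by
    linear_combination hab
  have h5 := congrArg (Polynomial.aeval x) hab2
  simp only [_root_.map_add, _root_.map_mul, _root_.map_sub, map_pow, _root_.map_one, aeval_X, aeval_C, hP] at h5
  rw [hx, sub_self, zero_mul, add_zero] at h5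
  exact ⟨⟨_, Polynomial.aeval x a, h5, h4⟩, rfl⟩

lemma map_algebraMap_matrix {α β : Type*} [CommRing α] [CommRing β] (f : α →+* β)
    {n : ℕ} (t : α) :
    (algebraMap α (Matrix (Fin n) (Fin n) α) t).map f
      = algebraMap β (Matrix (Fin n) (Fin n) β) (f t) := by
  ext i j
  simp [Matrix.map_apply, Matrix.algebraMap_matrix_apply, apply_ite f]

theorem lie_shadow_eq_addSpan_group_shadow
    (o : Type*) [CommRing o] [IsDomain o] [IsDiscreteValuationRing o]
    [IsAdicComplete (IsLocalRing.maximalIdeal o) o]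
    [Fintype (IsLocalRing.ResidueField o)]
    (hq : 2 < Fintype.card (IsLocalRing.ResidueField o))
    (n ℓ : ℕ)
    (A : Matrix (Fin n) (Fin n) (o ⧸ IsLocalRing.maximalIdeal o ^ ℓ)) :
    {Y : Matrix (Fin n) (Fin n) (IsLocalRing.ResidueField o) |
        ∃ X : Matrix (Fin n) (Fin n) o,
          X.map (Ideal.Quotient.mk (IsLocalRing.maximalIdeal o ^ ℓ)) * A
            = A * X.map (Ideal.Quotient.mk (IsLocalRing.maximalIdeal o ^ ℓ)) ∧
          Y = X.map (IsLocalRing.residue o)}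
      = ↑(AddSubgroup.closure
          {Y : Matrix (Fin n) (Fin n) (IsLocalRing.ResidueField o) |
            ∃ g : Matrix (Fin n) (Fin n) o, IsUnit g ∧
              g.map (Ideal.Quotient.mk (IsLocalRing.maximalIdeal o ^ ℓ)) * A
                = A * g.map (Ideal.Quotient.mk (IsLocalRing.maximalIdeal o ^ ℓ)) ∧
              Y = g.map (IsLocalRing.residue o)}) := by
  classical
  obtain ⟨cb, hcb0, hcb1⟩ : ∃ c : IsLocalRing.ResidueField o, c ≠ 0 ∧ c + 1 ≠ 0 := by
    by_contra h
    push_neg at h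
    have hsub : (Finset.univ : Finset (IsLocalRing.ResidueField o)) ⊆ {0, -1} := by
      intro c _
      rcases eq_or_ne c 0 with rfl | hc
      · simp
      · have h1 := h c hc
        have h2 : c = -1 := by linear_combination h1
        simp [h2]
    have hle := Finset.card_le_card hsub
    have h2 : ({0, -1} : Finset (IsLocalRing.ResidueField o)).card ≤ 2 :=
      le_trans (Finset.card_insert_le _ _) (by simp)
    rw [Finset.card_univ] at hle
    omega
  obtain ⟨c, rfl⟩ := Ideal.Quotient.mk_surjective cb
  set k := IsLocalRing.ResidueField o
  set ρ : o →+* k := IsLocalRing.residue o with hρ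
  set π : o →+* (o ⧸ IsLocalRing.maximalIdeal o ^ ℓ) :=
    Ideal.Quotient.mk (IsLocalRing.maximalIdeal o ^ ℓ) with hπ
  set S : Set (Matrix (Fin n) (Fin n) k) :=
    {Y | ∃ g : Matrix (Fin n) (Fin n) o, IsUnit g ∧
        g.map π * A = A * g.map π ∧ Y = g.map ρ} with hS
  -- The Lie shadow is an additive subgroup.
  set L : AddSubgroup (Matrix (Fin n) (Fin n) k) :=
    { carrier := {Y | ∃ X : Matrix (Fin n) (Fin n) o,
        X.map π * A = A * X.map π ∧ Y = X.map ρ}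
      zero_mem' := ⟨0, by simp [← RingHom.mapMatrix_apply]⟩
      add_mem' := by
        rintro Y₁ Y₂ ⟨X₁, h₁, rfl⟩ ⟨X₂, h₂, rfl⟩
        refine ⟨X₁ + X₂, ?_, by simp [← RingHom.mapMatrix_apply]⟩
        simp only [← RingHom.mapMatrix_apply] at h₁ h₂ ⊢
        rw [map_add, add_mul, mul_add, h₁, h₂]
      neg_mem' := by
        rintro Y ⟨X, h, rfl⟩
        refine ⟨-X, ?_, by simp [← RingHom.mapMatrix_apply]⟩
        simp only [← RingHom.mapMatrix_apply] at h ⊢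
        rw [map_neg, neg_mul, mul_neg, h] } with hL
  refine Set.Subset.antisymm ?_ ?_
  · -- hard direction
    rintro Y ⟨X, hcomm, rfl⟩
    set x : Matrix (Fin n) (Fin n) k := X.map ρ with hx
    obtain ⟨m, hm, hxm⟩ := exists_pow_idem x
    -- the family of group elements
    set G : o → Matrix (Fin n) (Fin n) o := fun t =>
      X - algebraMap o _ t + algebraMap o _ t * X ^ m with hG
    have mapρ : ∀ t : o, (G t).map ρ
        = x - algebraMap k _ (ρ t) + algebraMap k _ (ρ t) * x ^ m := by
      intro t
      simp only [hG, ← RingHom.mapMatrix_apply, _root_.map_add, _root_.map_sub, _root_.map_mul, map_pow]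
      rw [RingHom.mapMatrix_apply, RingHom.mapMatrix_apply, map_algebraMap_matrix]
    have mapπ : ∀ t : o, (G t).map π
        = X.map π - algebraMap _ _ (π t) + algebraMap _ _ (π t) * (X.map π) ^ m := by
      intro t
      simp only [hG, ← RingHom.mapMatrix_apply, _root_.map_add, _root_.map_sub, _root_.map_mul, map_pow]
      rw [RingHom.mapMatrix_apply, RingHom.mapMatrix_apply, map_algebraMap_matrix]
    have hmem : ∀ t : o, ρ t ≠ 0 → (G t).map ρ ∈ S := by
      intro t ht
      refine ⟨G t, ?_, ?_, rfl⟩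
      · -- unit
        have hu : IsUnit ((G t).map ρ) := by
          rw [mapρ]
          exact aux_isUnit x m hm hxm (ρ t) (isUnit_iff_ne_zero.mpr ht)
        have hdet : IsUnit ((G t).map ρ).det := (Matrix.isUnit_iff_isUnit_det _).mp hu
        rw [← RingHom.mapMatrix_apply, ← RingHom.map_det] at hdet
        have hdet' : IsUnit (G t).det := by
          by_contra hnu
          have hmem' : (G t).det ∈ IsLocalRing.maximalIdeal o := by
            rwa [IsLocalRing.mem_maximalIdeal, mem_nonunits_iff]
          have hz : ρ ((G t).det) = 0 := Ideal.Quotient.eq_zero_iff_mem.mpr hmem'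
          rw [hz] at hdet
          exact not_isUnit_zero hdet
        exact (Matrix.isUnit_iff_isUnit_det _).mpr hdet'
      · -- commutes with A
        rw [mapπ]
        have h1 : Commute A (X.map π) := hcomm.symm
        have h2 : ∀ s : o ⧸ IsLocalRing.maximalIdeal o ^ ℓ,
            Commute A (algebraMap (o ⧸ IsLocalRing.maximalIdeal o ^ ℓ)
              (Matrix (Fin n) (Fin n) (o ⧸ IsLocalRing.maximalIdeal o ^ ℓ)) s) :=
          fun s => (Algebra.commutes s A).symm
        exact (((h1.sub_right (h2 _)).add_right ((h2 _).mul_right (h1.pow_right m)))).symm.eq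
    have m1 : (G 1).map ρ ∈ AddSubgroup.closure S :=
      AddSubgroup.subset_closure (hmem 1 (by simp))
    have m2 : (G c).map ρ ∈ AddSubgroup.closure S :=
      AddSubgroup.subset_closure (hmem c hcb0)
    have m3 : (G (c + 1)).map ρ ∈ AddSubgroup.closure S :=
      AddSubgroup.subset_closure (hmem (c + 1)
        (by simp only [_root_.map_add, _root_.map_one]; exact hcb1))
    have key : x = (G 1).map ρ + ((G c).map ρ - (G (c + 1)).map ρ) := by
      simp only [mapρ, _root_.map_add, _root_.map_one]
      noncomm_ring
    have hfin : x ∈ AddSubgroup.closure S := by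
      rw [key]; exact add_mem m1 (sub_mem m2 m3)
    exact hfin
  · -- easy direction
    intro Y hY
    refine (AddSubgroup.closure_le L).mpr ?_ hY
    rintro Z ⟨g, hg, hgc, rfl⟩
    exact ⟨g, hgc, rfl⟩
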